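/- Let τ : HH → HH be a double entwining making H a τ-bimonad. Then the composite τ̃ = mH ∘ Hτ ∘ δH : HH → HH is a mixed distributive law from the monad (H, m, e) to the comonad (H, δ, ε); in particular H is a bimonad with entwining τ̃. -/
import Mathlib


open CategoryTheory

universe v u

variable {A : Type u} [Category.{v} A]

/-- `(H, m, e)` is a monad on `A` (stated componentwise). -/
structure IsMonadOn (H : A ⥤ A) (m : H ⋙ H ⟶ H) (e : 𝟭 A ⟶ H) : Prop where
  assoc : ∀ a : A, H.map (m.app a) ≫ m.app a = m.app (H.obj a) ≫ m.app a
  unit_left : ∀ a : A, e.app (H.obj a) ≫ m.app a = 𝟙 (H.obj a)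
  unit_right : ∀ a : A, H.map (e.app a) ≫ m.app a = 𝟙 (H.obj a)

/-- `(H, δ, ε)` is a comonad on `A` (stated componentwise). -/
structure IsComonadOn (H : A ⥤ A) (δ : H ⟶ H ⋙ H) (ε : H ⟶ 𝟭 A) : Prop where
  coassoc : ∀ a : A, δ.app a ≫ H.map (δ.app a) = δ.app a ≫ δ.app (H.obj a)
  counit_left : ∀ a : A, δ.app a ≫ ε.app (H.obj a) = 𝟙 (H.obj a)
  counit_right : ∀ a : A, δ.app a ≫ H.map (ε.app a) = 𝟙 (H.obj a)

/-- `τ : HH ⟶ HH` is a double entwining: a mixed distributive law from the monad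
`(H, m, e)` to the comonad `(H, δ, ε)` and also one from the comonad to the monad. -/
structure IsDoubleEntwining (H : A ⥤ A) (m : H ⋙ H ⟶ H) (e : 𝟭 A ⟶ H)
    (δ : H ⟶ H ⋙ H) (ε : H ⟶ 𝟭 A) (τ : H ⋙ H ⟶ H ⋙ H) : Prop where
  mc_unit : ∀ a : A, e.app (H.obj a) ≫ τ.app a = H.map (e.app a)
  mc_counit : ∀ a : A, τ.app a ≫ ε.app (H.obj a) = H.map (ε.app a)
  mc_delta : ∀ a : A, τ.app a ≫ δ.app (H.obj a)
      = H.map (δ.app a) ≫ τ.app (H.obj a) ≫ H.map (τ.app a)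
  mc_mul : ∀ a : A, m.app (H.obj a) ≫ τ.app a
      = H.map (τ.app a) ≫ τ.app (H.obj a) ≫ H.map (m.app a)
  cm_unit : ∀ a : A, H.map (e.app a) ≫ τ.app a = e.app (H.obj a)
  cm_counit : ∀ a : A, τ.app a ≫ H.map (ε.app a) = ε.app (H.obj a)
  cm_delta : ∀ a : A, τ.app a ≫ H.map (δ.app a)
      = δ.app (H.obj a) ≫ H.map (τ.app a) ≫ τ.app (H.obj a)
  cm_mul : ∀ a : A, H.map (m.app a) ≫ τ.app a
      = τ.app (H.obj a) ≫ H.map (τ.app a) ≫ m.app (H.obj a)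

/-- `H` is a `τ`-bimonad: a monad and a comonad with a double entwining `τ` such that
`δ ∘ m = mm ∘ HτH ∘ δδ`, `ε ∘ m = ε ∘ Hε`, `δ ∘ e = eH ∘ e` and `ε ∘ e = 1`. -/
structure IsTauBimonadOn (H : A ⥤ A) (m : H ⋙ H ⟶ H) (e : 𝟭 A ⟶ H)
    (δ : H ⟶ H ⋙ H) (ε : H ⟶ 𝟭 A) (τ : H ⋙ H ⟶ H ⋙ H) : Prop where
  monad : IsMonadOn H m e
  comonad : IsComonadOn H δ ε
  ent : IsDoubleEntwining H m e δ ε τ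
  compat : ∀ a : A, m.app a ≫ δ.app a
      = δ.app (H.obj a) ≫ H.map (H.map (δ.app a)) ≫ H.map (τ.app (H.obj a))
          ≫ m.app (H.obj (H.obj a)) ≫ H.map (m.app a)
  counit_monad : ∀ a : A, m.app a ≫ ε.app a = H.map (ε.app a) ≫ ε.app a
  unit_comonad : ∀ a : A, e.app a ≫ δ.app a = e.app a ≫ e.app (H.obj a)
  counit_unit : ∀ a : A, e.app a ≫ ε.app a = 𝟙 a

/-- The component at `a` of `τ̃ = mH ∘ Hτ ∘ δH : HH ⟶ HH`. -/
def tauTilde (H : A ⥤ A) (m : H ⋙ H ⟶ H) (δ : H ⟶ H ⋙ H)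
    (τ : H ⋙ H ⟶ H ⋙ H) (a : A) : H.obj (H.obj a) ⟶ H.obj (H.obj a) :=
  δ.app (H.obj a) ≫ H.map (τ.app a) ≫ m.app (H.obj a)

/-- For a `τ`-bimonad `H`, the composite `τ̃ = mH ∘ Hτ ∘ δH` is a mixed
distributive law from the monad `(H, m, e)` to the comonad `(H, δ, ε)`; in particular
`H` is a bimonad with entwining `τ̃` (the compatibility `δ ∘ m = Hm ∘ τ̃H ∘ Hδ` holds). -/
theorem stmt12 (H : A ⥤ A) (m : H ⋙ H ⟶ H) (e : 𝟭 A ⟶ H)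
    (δ : H ⟶ H ⋙ H) (ε : H ⟶ 𝟭 A) (τ : H ⋙ H ⟶ H ⋙ H)
    (hT : IsTauBimonadOn H m e δ ε τ) :
    (∀ a : A, e.app (H.obj a) ≫ tauTilde H m δ τ a = H.map (e.app a)) ∧
    (∀ a : A, tauTilde H m δ τ a ≫ ε.app (H.obj a) = H.map (ε.app a)) ∧
    (∀ a : A, tauTilde H m δ τ a ≫ δ.app (H.obj a)
        = H.map (δ.app a) ≫ tauTilde H m δ τ (H.obj a) ≫ H.map (tauTilde H m δ τ a)) ∧
    (∀ a : A, m.app (H.obj a) ≫ tauTilde H m δ τ a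
        = H.map (tauTilde H m δ τ a) ≫ tauTilde H m δ τ (H.obj a) ≫ H.map (m.app a)) ∧
    (∀ a : A, m.app a ≫ δ.app a
        = H.map (δ.app a) ≫ tauTilde H m δ τ (H.obj a) ≫ H.map (m.app a)) := by
  have natδ : ∀ (X Y : A) (f : X ⟶ Y),
      H.map f ≫ δ.app Y = δ.app X ≫ H.map (H.map f) := fun _ _ f => by
    simpa using δ.naturality f
  have natm : ∀ (X Y : A) (f : X ⟶ Y),
      H.map (H.map f) ≫ m.app Y = m.app X ≫ H.map f := fun _ _ f => by
    simpa using m.naturality f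
  have natτ : ∀ (X Y : A) (f : X ⟶ Y),
      H.map (H.map f) ≫ τ.app Y = τ.app X ≫ H.map (H.map f) := fun _ _ f => by
    simpa using τ.naturality f
  have nate : ∀ (X Y : A) (f : X ⟶ Y),
      f ≫ e.app Y = e.app X ≫ H.map f := fun _ _ f => by
    simpa using e.naturality f
  have natε : ∀ (X Y : A) (f : X ⟶ Y),
      H.map f ≫ ε.app Y = ε.app X ≫ f := fun _ _ f => by
    simpa using ε.naturality f
  refine ⟨?_, ?_, ?_, ?_, ?_⟩
  · -- unit
    intro a
    simp only [tauTilde]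
    slice_lhs 1 2 => rw [hT.unit_comonad (H.obj a)]
    slice_lhs 2 3 => rw [← nate (H.obj (H.obj a)) (H.obj (H.obj a)) (τ.app a)]
    slice_lhs 1 2 => rw [hT.ent.mc_unit a]
    slice_lhs 2 3 => rw [hT.monad.unit_left (H.obj a)]
    simp
  · -- counit
    intro a
    simp only [tauTilde, Category.assoc]
    slice_lhs 3 4 => rw [hT.counit_monad (H.obj a)]
    slice_lhs 2 3 => rw [← H.map_comp, hT.ent.mc_counit a]
    slice_lhs 2 3 => rw [natε (H.obj (H.obj a)) (H.obj a) (H.map (ε.app a))]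
    slice_lhs 1 2 => rw [hT.comonad.counit_left (H.obj a)]
    simp
  · -- delta compatibility
    intro a
    simp only [tauTilde, Functor.map_comp, Category.assoc]
    slice_lhs 3 4 => rw [hT.compat (H.obj a)]
    slice_lhs 2 3 => rw [natδ (H.obj (H.obj a)) (H.obj (H.obj a)) (τ.app a)]
    slice_lhs 1 2 => rw [← hT.comonad.coassoc (H.obj a)]
    slice_lhs 3 4 => rw [← H.map_comp, ← H.map_comp, hT.ent.mc_delta a,
      H.map_comp, H.map_comp, H.map_comp, H.map_comp]
    slice_lhs 5 6 => rw [← H.map_comp, natτ (H.obj (H.obj a)) (H.obj (H.obj a)) (τ.app a), H.map_comp]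
    slice_lhs 6 7 => rw [natm (H.obj (H.obj (H.obj a))) (H.obj (H.obj (H.obj a))) (H.map (τ.app a))]
    slice_rhs 4 5 => rw [← natm (H.obj (H.obj a)) (H.obj (H.obj (H.obj a))) (δ.app (H.obj a))]
    slice_rhs 3 4 => rw [← H.map_comp, hT.ent.cm_delta (H.obj a),
      H.map_comp, H.map_comp]
    slice_rhs 2 3 => rw [hT.comonad.coassoc (H.obj (H.obj a))]
    slice_rhs 1 2 => rw [natδ (H.obj a) (H.obj (H.obj a)) (δ.app a)]
    slice_rhs 2 3 => rw [natδ (H.obj (H.obj a)) (H.obj (H.obj (H.obj a))) (H.map (δ.app a))]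
    slice_rhs 1 2 => rw [← hT.comonad.coassoc (H.obj a)]
    simp only [Category.assoc]
  · -- mul compatibility
    intro a
    simp only [tauTilde, Functor.map_comp, Category.assoc]
    slice_lhs 1 2 => rw [hT.compat (H.obj a)]
    slice_lhs 5 6 => rw [← H.map_comp, hT.ent.mc_mul a,
      H.map_comp, H.map_comp]
    slice_lhs 4 5 => rw [← natm (H.obj (H.obj (H.obj a))) (H.obj (H.obj (H.obj a))) (H.map (τ.app a))]
    slice_lhs 7 8 => rw [natm (H.obj (H.obj a)) (H.obj a) (m.app a)]
    slice_rhs 3 4 => rw [natδ (H.obj (H.obj (H.obj a))) (H.obj (H.obj a)) (m.app (H.obj a))]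
    slice_rhs 4 5 => rw [← H.map_comp, hT.ent.cm_mul (H.obj a),
      H.map_comp, H.map_comp]
    slice_rhs 6 7 => rw [hT.monad.assoc (H.obj (H.obj a))]
    slice_rhs 5 6 => rw [natm (H.obj (H.obj (H.obj a))) (H.obj (H.obj (H.obj a))) (τ.app (H.obj a))]
    slice_rhs 2 3 => rw [natδ (H.obj (H.obj (H.obj a))) (H.obj (H.obj (H.obj a))) (H.map (τ.app a))]
    slice_rhs 3 4 => rw [← H.map_comp, natτ (H.obj (H.obj a)) (H.obj (H.obj a)) (τ.app a), H.map_comp]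
    slice_rhs 1 2 => rw [natδ (H.obj (H.obj a)) (H.obj (H.obj (H.obj a))) (δ.app (H.obj a))]
    simp only [Category.assoc]
  · -- the bimonad compatibility with the new entwining
    intro a
    rw [hT.compat a]
    simp only [tauTilde, Functor.map_comp, Category.assoc]
    slice_rhs 1 2 => rw [natδ (H.obj a) (H.obj (H.obj a)) (δ.app a)]
    simp only [Category.assoc]
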